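/- The Ramanujan sum satisfies von Sterneck's formula: c_n(m) = μ(n/gcd(m,n))·φ(n)/φ(n/gcd(m,n)), where μ is the Möbius function and φ the Euler totient function. -/

import Mathlib

open Finset Complex ArithmeticFunction
open scoped ArithmeticFunction.Moebius ArithmeticFunction.zeta

-- geometric sum lemma
lemma geom_aux {N : ℕ} (hN : N ≠ 0) {z : ℂ} (hz : IsPrimitiveRoot z N) (m : ℕ) :
    ∑ j ∈ Icc 1 N, z ^ (j * m) = if N ∣ m then (N : ℂ) else 0 := by
  have h1 : ∀ j ∈ Icc 1 N, z ^ (j * m) = (z ^ m) ^ j := fun j _ => by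
    rw [← pow_mul, mul_comm]
  rw [Finset.sum_congr rfl h1]
  by_cases h : N ∣ m
  · rw [if_pos h, (hz.pow_eq_one_iff_dvd m).mpr h]
    simp [Nat.card_Icc]
  · rw [if_neg h]
    have hne : z ^ m ≠ 1 := fun hh => h ((hz.pow_eq_one_iff_dvd m).mp hh)
    have hNpow : (z ^ m) ^ N = 1 := by
      rw [← pow_mul, mul_comm, pow_mul, hz.pow_eq_one, one_pow]
    have hIcc : Icc 1 N = Ico 1 (N + 1) := by rw [Finset.Ico_add_one_right_eq_Icc]
    rw [hIcc, geom_sum_Ico hne (by omega), pow_succ, hNpow, one_mul, pow_one, sub_self,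
      zero_div]

noncomputable def ramanujanSum (n m : ℕ) : ℂ :=
  ∑ k ∈ (Finset.Icc 1 n).filter (fun k => Nat.gcd k n = 1),
    Complex.exp (2 * Real.pi * Complex.I * k * m / n)

lemma divisors_gcd_eq {k n : ℕ} (hn : n ≠ 0) :
    (Nat.gcd k n).divisors = n.divisors.filter (· ∣ k) := by
  ext d
  simp only [Nat.mem_divisors, Finset.mem_filter, Nat.dvd_gcd_iff]
  constructor
  · rintro ⟨⟨h1, h2⟩, -⟩; exact ⟨⟨h2, hn⟩, h1⟩
  · rintro ⟨⟨h2, -⟩, h1⟩; exact ⟨⟨h1, h2⟩, fun hh => hn (Nat.eq_zero_of_gcd_eq_zero_right hh)⟩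

lemma sum_moebius_divisors (g : ℕ) (hg : g ≠ 0) :
    ∑ d ∈ g.divisors, (μ d : ℤ) = if g = 1 then 1 else 0 := by
  have h : ((μ * ζ : ArithmeticFunction ℤ)) g = (1 : ArithmeticFunction ℤ) g := by
    rw [moebius_mul_coe_zeta]
  rwa [coe_mul_zeta_apply, one_apply] at h

lemma ramanujan_eq_sum (n m : ℕ) (hn : n ≠ 0) :
    ramanujanSum n m =
      ∑ d ∈ n.divisors, ((μ d : ℤ) : ℂ) * (if (n / d) ∣ m then ((n / d : ℕ) : ℂ) else 0) := by
  have hz := Complex.isPrimitiveRoot_exp n hn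
  set z : ℂ := Complex.exp (2 * Real.pi * Complex.I / n) with hzdef
  have hterm : ∀ k : ℕ, Complex.exp (2 * Real.pi * Complex.I * k * m / n) = z ^ (k * m) := by
    intro k
    rw [hzdef, ← Complex.exp_nat_mul]
    congr 1
    push_cast
    ring
  unfold ramanujanSum
  rw [Finset.sum_filter]
  have step1 : ∀ k ∈ Icc 1 n,
      (if Nat.gcd k n = 1 then Complex.exp (2 * Real.pi * Complex.I * k * m / n) else 0)
        = ∑ d ∈ n.divisors, (if d ∣ k then ((μ d : ℤ) : ℂ) * z ^ (k * m) else 0) := by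
    intro k _
    have hg : Nat.gcd k n ≠ 0 := fun hh => hn (Nat.eq_zero_of_gcd_eq_zero_right hh)
    have hsum : (∑ d ∈ (Nat.gcd k n).divisors, ((μ d : ℤ) : ℂ))
        = if Nat.gcd k n = 1 then 1 else 0 := by
      rw [← Int.cast_sum, sum_moebius_divisors _ hg]
      split <;> simp
    rw [hterm k, ← Finset.sum_filter, ← divisors_gcd_eq hn, ← Finset.sum_mul, hsum]
    by_cases h1 : Nat.gcd k n = 1 <;> simp [h1]
  rw [Finset.sum_congr rfl step1, Finset.sum_comm]
  refine Finset.sum_congr rfl fun d hd => ?_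
  obtain ⟨hdn, -⟩ := Nat.mem_divisors.mp hd
  have hd0 : d ≠ 0 := fun h => hn (by simpa [h] using hdn)
  have hnd0 : n / d ≠ 0 :=
    Nat.div_ne_zero_iff.mpr ⟨hd0, Nat.le_of_dvd (Nat.pos_of_ne_zero hn) hdn⟩
  have hzd : IsPrimitiveRoot (z ^ d) (n / d) :=
    hz.pow (Nat.pos_of_ne_zero hn) (Nat.mul_div_cancel' hdn).symm
  rw [← Finset.sum_filter]
  have hre : ∑ k ∈ (Icc 1 n).filter (fun k => d ∣ k), ((μ d : ℤ) : ℂ) * z ^ (k * m)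
      = ∑ j ∈ Icc 1 (n / d), ((μ d : ℤ) : ℂ) * (z ^ d) ^ (j * m) := by
    refine Finset.sum_nbij' (fun k => k / d) (fun j => d * j) ?_ ?_ ?_ ?_ ?_
    · intro k hk
      simp only [Finset.mem_filter, Finset.mem_Icc] at hk ⊢
      obtain ⟨⟨h1, h2⟩, h3⟩ := hk
      exact ⟨Nat.one_le_div_iff (Nat.pos_of_ne_zero hd0) |>.mpr (Nat.le_of_dvd (by omega) h3),
        Nat.div_le_div_right h2⟩
    · intro j hj
      simp only [Finset.mem_Icc] at hj
      simp only [Finset.mem_filter, Finset.mem_Icc]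
      refine ⟨⟨by nlinarith [Nat.pos_of_ne_zero hd0, hj.1], ?_⟩, Dvd.intro j rfl⟩
      calc d * j ≤ d * (n / d) := Nat.mul_le_mul_left d hj.2
        _ = n := Nat.mul_div_cancel' hdn
    · intro k hk
      simp only [Finset.mem_filter] at hk
      exact Nat.mul_div_cancel' hk.2
    · intro j hj
      exact Nat.mul_div_cancel_left j (Nat.pos_of_ne_zero hd0)
    · intro k hk
      simp only [Finset.mem_filter] at hk
      congr 1
      rw [← pow_mul]
      congr 1
      obtain ⟨c, hc⟩ := hk.2
      subst hc
      rw [Nat.mul_div_cancel_left c (Nat.pos_of_ne_zero hd0)]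
      ring
  rw [hre, ← Finset.mul_sum, geom_aux hnd0 hzd m]

section holder

variable (m : ℕ)

noncomputable def hfun (m : ℕ) : ArithmeticFunction ℂ :=
  ⟨fun e => if e ∣ m then (e : ℂ) else 0, by simp⟩

lemma hfun_apply (e : ℕ) : hfun m e = if e ∣ m then (e : ℂ) else 0 := rfl

lemma hfun_mult : (hfun m).IsMultiplicative := by
  constructor
  · simp [hfun_apply]
  · intro a b hab
    simp only [hfun_apply]
    by_cases ha : a ∣ m
    · by_cases hb : b ∣ m
      · rw [if_pos (Nat.Coprime.mul_dvd_of_dvd_of_dvd hab ha hb), if_pos ha, if_pos hb]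
        push_cast; ring
      · rw [if_neg (fun h => hb (dvd_trans (Dvd.intro_left a rfl) h)), if_neg hb, mul_zero]
    · rw [if_neg (fun h => ha (dvd_trans (Dvd.intro b rfl) h)), if_neg ha, zero_mul]

noncomputable def Gfun (m : ℕ) : ArithmeticFunction ℂ :=
  ⟨fun n => ((μ (n / Nat.gcd m n) : ℤ) : ℂ) * (Nat.totient n : ℂ) / (Nat.totient (n / Nat.gcd m n) : ℂ),
    by simp⟩

lemma Gfun_apply (n : ℕ) : Gfun m n =
    ((μ (n / Nat.gcd m n) : ℤ) : ℂ) * (Nat.totient n : ℂ) / (Nat.totient (n / Nat.gcd m n) : ℂ) := rfl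

lemma Gfun_mult : (Gfun m).IsMultiplicative := by
  constructor
  · simp [Gfun_apply]
  · intro a b hab
    rcases eq_or_ne a 0 with rfl | ha0
    · have hb1 : b = 1 := by simpa [Nat.coprime_zero_left] using hab
      simp [hb1, Gfun_apply]
    rcases eq_or_ne b 0 with rfl | hb0
    · have ha1 : a = 1 := by simpa [Nat.coprime_zero_right] using hab
      simp [ha1, Gfun_apply]
    simp only [Gfun_apply]
    have hga : Nat.gcd m a ∣ a := Nat.gcd_dvd_right m a
    have hgb : Nat.gcd m b ∣ b := Nat.gcd_dvd_right m b
    have hgcd : Nat.gcd m (a * b) = Nat.gcd m a * Nat.gcd m b := Nat.Coprime.gcd_mul m hab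
    have hdiv : a * b / (Nat.gcd m a * Nat.gcd m b) = (a / Nat.gcd m a) * (b / Nat.gcd m b) :=
      (Nat.div_mul_div_comm hga hgb).symm
    have hda : a / Nat.gcd m a ∣ a := Nat.div_dvd_of_dvd hga
    have hdb : b / Nat.gcd m b ∣ b := Nat.div_dvd_of_dvd hgb
    have hcop' : Nat.Coprime (a / Nat.gcd m a) (b / Nat.gcd m b) :=
      Nat.Coprime.coprime_dvd_left hda (Nat.Coprime.coprime_dvd_right hdb hab)
    rw [hgcd, hdiv, isMultiplicative_moebius.map_mul_of_coprime hcop',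
      Nat.totient_mul hab, Nat.totient_mul hcop']
    push_cast
    rw [div_mul_div_comm]
    congr 1
    ring

lemma holder_eq : (↑(μ) * hfun m : ArithmeticFunction ℂ) = Gfun m := by
  refine ArithmeticFunction.IsMultiplicative.eq_iff_eq_on_prime_powers _
    ((isMultiplicative_moebius.intCast).mul (hfun_mult m)) _ (Gfun_mult m) |>.mpr ?_
  intro p k hp
  rcases Nat.eq_zero_or_pos k with rfl | hk
  · rw [pow_zero, ((isMultiplicative_moebius.intCast).mul (hfun_mult m)).map_one,
      (Gfun_mult m).map_one]
  obtain ⟨j, rfl⟩ : ∃ j, k = j + 1 := ⟨k - 1, by omega⟩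
  have hp1 : 1 < p := hp.one_lt
  rw [ArithmeticFunction.mul_apply]
  simp only [ArithmeticFunction.intCoe_apply]
  rw [Nat.sum_divisorsAntidiagonal (f := fun x y => ((μ x : ℤ) : ℂ) * hfun m y),
    Nat.sum_divisors_prime_pow hp]
  have hterm : ∀ i ∈ range (j + 1 + 1),
      ((μ (p ^ i) : ℤ) : ℂ) * hfun m (p ^ (j + 1) / p ^ i)
        = (if i = 0 then hfun m (p ^ (j+1)) else 0)
          + (if i = 1 then -(hfun m (p ^ j)) else 0) := by
    intro i hi
    rcases i with _ | _ | i2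
    · simp
    · have h1 : p ^ (j + 1) / p = p ^ j := by
        rw [pow_succ, Nat.mul_div_cancel _ (by omega)]
      norm_num [h1, moebius_apply_prime hp]
    · rw [moebius_apply_prime_pow hp (by omega)]
      norm_num
  rw [Finset.sum_congr rfl hterm, Finset.sum_add_distrib,
    Finset.sum_ite_eq' (range (j + 1 + 1)) 0, Finset.sum_ite_eq' (range (j + 1 + 1)) 1]
  simp only [Finset.mem_range, if_pos (by omega : (0:ℕ) < j + 1 + 1),
    if_pos (by omega : (1:ℕ) < j + 1 + 1)]
  rw [hfun_apply, hfun_apply, Gfun_apply]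
  by_cases h2 : p ^ j ∣ m
  · by_cases h1 : p ^ (j + 1) ∣ m
    · have hg : Nat.gcd m (p ^ (j + 1)) = p ^ (j + 1) := by
        rw [Nat.gcd_comm]; exact Nat.gcd_eq_left h1
      rw [hg, Nat.div_self (by positivity), if_pos h1, if_pos h2]
      simp only [moebius_apply_one, Nat.totient_one, Nat.cast_one, Int.cast_one, div_one, one_mul]
      rw [Nat.totient_prime_pow hp (Nat.succ_pos j), Nat.succ_sub_one]
      push_cast [Nat.cast_sub hp.one_lt.le]
      ring
    · obtain ⟨i, hi, hgi⟩ := (Nat.dvd_prime_pow hp).mp (Nat.gcd_dvd_right m (p ^ (j + 1)))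
      have hpj : p ^ j ∣ Nat.gcd m (p ^ (j + 1)) :=
        Nat.dvd_gcd h2 (pow_dvd_pow p (Nat.le_succ j))
      have hji : j ≤ i := (Nat.pow_dvd_pow_iff_le_right hp1).mp (hgi ▸ hpj)
      have hij : i = j := by
        by_contra hne
        have hii : i = j + 1 := by omega
        apply h1
        rw [← hii, ← hgi]
        exact Nat.gcd_dvd_left m _
      rw [hgi, hij]
      have hdiv : p ^ (j + 1) / p ^ j = p := by
        rw [pow_succ, Nat.mul_div_cancel_left _ (by positivity)]
      rw [hdiv, if_neg h1, if_pos h2]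
      rw [moebius_apply_prime hp, Nat.totient_prime_pow hp (Nat.succ_pos j),
        Nat.succ_sub_one, Nat.totient_prime hp]
      have hne1 : ((p : ℂ)) - 1 ≠ 0 := by
        intro hh
        rw [sub_eq_zero] at hh
        have : p = 1 := by exact_mod_cast hh
        omega
      push_cast [Nat.cast_sub hp.one_lt.le]
      field_simp
      ring
  · have hj0 : j ≠ 0 := by
      rintro rfl
      exact h2 (by simpa using one_dvd m)
    have h1 : ¬ p ^ (j + 1) ∣ m := fun hh => h2 (dvd_trans (pow_dvd_pow p (Nat.le_succ j)) hh)
    rw [if_neg h1, if_neg h2]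
    obtain ⟨i, hi, hgi⟩ := (Nat.dvd_prime_pow hp).mp (Nat.gcd_dvd_right m (p ^ (j + 1)))
    have him : p ^ i ∣ m := hgi ▸ Nat.gcd_dvd_left m _
    have hilt : i < j := by
      by_contra hge
      exact h2 (dvd_trans (pow_dvd_pow p (by omega)) him)
    rw [hgi, Nat.pow_div (by omega) (by omega), moebius_apply_prime_pow hp (by omega),
      if_neg (by omega : ¬ j + 1 - i = 1)]
    simp

end holder

theorem vonSterneck (n m : ℕ) (hn : 1 ≤ n) (hm : 1 ≤ m) :
    ramanujanSum n m =
      ((ArithmeticFunction.moebius (n / Nat.gcd m n) : ℤ) : ℂ) *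
        (Nat.totient n : ℂ) / (Nat.totient (n / Nat.gcd m n) : ℂ) := by
  have hn0 : n ≠ 0 := by omega
  rw [ramanujan_eq_sum n m hn0, ← Gfun_apply m n, ← holder_eq m, ArithmeticFunction.mul_apply]
  simp only [ArithmeticFunction.intCoe_apply]
  rw [Nat.sum_divisorsAntidiagonal (f := fun x y => ((μ x : ℤ) : ℂ) * hfun m y)]
  exact Finset.sum_congr rfl fun d _ => by rw [hfun_apply]
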